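/- arXiv:2202.12073 — 4 statements merged into one kernel-verified Lean document; each statement's English description precedes it below -/
import Mathlib

section
/- Let a be an integer, m ≥ 2 an integer, g₁ = gcd(a, m), and g₂ = gcd(g₁^⌊log₂ m⌋ mod m, m). Then a is coprime to m/g₂. -/
theorem stmt_4 (a : ℤ) (m : ℕ) (hm : 2 ≤ m) (g₁ g₂ : ℕ)
    (hg₁ : g₁ = Int.gcd a m)
    (hg₂ : g₂ = Nat.gcd (g₁ ^ Nat.log 2 m % m) m) :
    Int.gcd a (m / g₂) = 1 := by
  have hm0 : 0 < m := by omega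
  have hg₂' : g₂ = Nat.gcd (g₁ ^ Nat.log 2 m) m := by
    rw [hg₂, ← Nat.gcd_rec, Nat.gcd_comm]
  have hg₂m : g₂ ∣ m := hg₂' ▸ Nat.gcd_dvd_right _ _
  have hg₂0 : 0 < g₂ := Nat.pos_of_dvd_of_pos hg₂m hm0
  by_contra h
  obtain ⟨q, hq, hqd⟩ := Nat.exists_prime_and_dvd h
  have hqa : (q : ℤ) ∣ a := by
    have := Nat.dvd_trans hqd (Nat.gcd_dvd_left _ _)
    exact Int.dvd_natAbs.mp (Int.natCast_dvd_natCast.mpr this)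
  have hqmd : q ∣ m / g₂ := Nat.dvd_trans hqd (Nat.gcd_dvd_right _ _)
  have hqm : q ∣ m := hqmd.trans (Nat.div_dvd_of_dvd hg₂m)
  have hqg₁ : q ∣ g₁ := by
    have : (q : ℤ) ∣ (Int.gcd a m : ℤ) :=
      Int.dvd_coe_gcd hqa (Int.natCast_dvd_natCast.mpr hqm)
    exact_mod_cast hg₁ ▸ this
  set k := m.factorization q with hk
  have hqkm : q ^ k ∣ m := Nat.ordProj_dvd m q
  have hkn : k ≤ Nat.log 2 m := by
    have h1 : 2 ^ k ≤ q ^ k :=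
      Nat.pow_le_pow_left hq.two_le k
    have h2 : q ^ k ≤ m := Nat.le_of_dvd hm0 hqkm
    exact (Nat.le_log_iff_pow_le (by norm_num) (by omega)).mpr (h1.trans h2)
  have hqkg₂ : q ^ k ∣ g₂ := by
    rw [hg₂']
    exact Nat.dvd_gcd ((pow_dvd_pow_of_dvd hqg₁ k).trans (pow_dvd_pow g₁ hkn)) hqkm
  have : q ^ (k + 1) ∣ m := by
    have := mul_dvd_mul hqkg₂ hqmd
    rwa [← pow_succ, Nat.mul_div_cancel' hg₂m] at this
  exact Nat.pow_succ_factorization_not_dvd (by omega) hq this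
end

section
/- Let a be an integer, m ≥ 2 an integer, and p a prime with p dividing m and p² > m. Let g₁ = gcd(a, m) and g₂ = gcd(g₁^⌊log₂ m⌋ mod m, m). Define m' = g₁ if g₁² > m, and m' = m/g₂ otherwise. Then p divides m'. -/
theorem stmt_6 (a : ℤ) (m : ℕ) (hm : 2 ≤ m) (p : ℕ) (hp : p.Prime)
    (hpm : p ∣ m) (hp2 : p ^ 2 > m) (g₁ g₂ m' : ℕ)
    (hg₁ : g₁ = Int.gcd a m)
    (hg₂ : g₂ = Nat.gcd (g₁ ^ Nat.log 2 m % m) m)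
    (hm' : m' = if g₁ ^ 2 > m then g₁ else m / g₂) :
    p ∣ m' := by
  have hm0 : 0 < m := by omega
  have hg₁m : g₁ ∣ m := by
    have := Int.gcd_dvd_right (a := a) (b := (m : ℤ))
    rw [← hg₁] at this
    exact_mod_cast this
  by_cases hpg : p ∣ g₁
  · have hg₁0 : 0 < g₁ := by
      rcases Nat.eq_zero_or_pos g₁ with h | h
      · exfalso; rw [h] at hg₁m; simp at hg₁m; omega
      · exact h
    have hpl : p ≤ g₁ := Nat.le_of_dvd hg₁0 hpg
    have : m < g₁ ^ 2 := lt_of_lt_of_le hp2 (Nat.pow_le_pow_left hpl 2)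
    rw [hm', if_pos this]
    exact hpg
  · -- p does not divide g₁
    obtain ⟨s, hs⟩ := hpm
    have hpm : p ∣ m := ⟨s, hs⟩
    have hp0 : 0 < p := hp.pos
    have hs0 : 0 < s := by
      rcases Nat.eq_zero_or_pos s with h | h
      · rw [h, Nat.mul_zero] at hs; omega
      · exact h
    have hcop : Nat.Coprime p g₁ := (Nat.Prime.coprime_iff_not_dvd hp).mpr hpg
    have hg₁s : g₁ ∣ s := by
      have : g₁ ∣ p * s := hs ▸ hg₁m
      exact (Nat.Coprime.dvd_of_dvd_mul_left (Nat.Coprime.symm hcop) this)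
    have hsp : s < p := by
      by_contra h
      push_neg at h
      have h1 : p ^ 2 ≤ p * s := by rw [pow_two]; exact Nat.mul_le_mul le_rfl h
      omega
    have hg₁lt : ¬ (g₁ ^ 2 > m) := by
      have hgs : g₁ ≤ s := Nat.le_of_dvd hs0 hg₁s
      have : g₁ ^ 2 ≤ s * s := by rw [pow_two]; exact Nat.mul_le_mul hgs hgs
      have hss : s * s < p * s := (Nat.mul_lt_mul_right hs0).mpr hsp
      omega
    rw [hm', if_neg hg₁lt]
    -- p does not divide g₂
    have hg₂m : g₂ ∣ m := hg₂ ▸ Nat.gcd_dvd_right _ _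
    have hpg₂ : ¬ p ∣ g₂ := by
      intro hd
      have h1 : p ∣ g₁ ^ Nat.log 2 m % m := hd.trans (hg₂ ▸ Nat.gcd_dvd_left _ _)
      have h2 : p ∣ g₁ ^ Nat.log 2 m := (Nat.dvd_mod_iff hpm).mp h1
      exact hpg (hp.dvd_of_dvd_pow h2)
    have hcop2 : Nat.Coprime p g₂ := (Nat.Prime.coprime_iff_not_dvd hp).mpr hpg₂
    have hmeq : m / g₂ * g₂ = m := Nat.div_mul_cancel hg₂m
    exact Nat.Coprime.dvd_of_dvd_mul_right hcop2 (by rw [hmeq]; exact hpm)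
end

section
/- Let a be an integer, m ≥ 2 an integer, g₁ = gcd(a, m), g₂ = gcd(g₁^⌊log₂ m⌋ mod m, m), and m' = g₁ if g₁² > m else m/g₂. Then a is either divisible by m' or coprime to m' (so a mod m' is either zero or invertible). -/
theorem stmt_7 (a : ℤ) (m : ℕ) (hm : 2 ≤ m) (g₁ g₂ m' : ℕ)
    (hg₁ : g₁ = Int.gcd a m)
    (hg₂ : g₂ = Nat.gcd (g₁ ^ Nat.log 2 m % m) m)
    (hm' : m' = if g₁ ^ 2 > m then g₁ else m / g₂) :
    (m' : ℤ) ∣ a ∨ Int.gcd a m' = 1 := by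
  have hm0 : m ≠ 0 := by omega
  have hg₁' : g₁ = Nat.gcd a.natAbs m := by
    simpa [Int.gcd] using hg₁
  have hg₁a : g₁ ∣ a.natAbs := hg₁' ▸ Nat.gcd_dvd_left _ _
  have hg₁m : g₁ ∣ m := hg₁' ▸ Nat.gcd_dvd_right _ _
  have hg₁0 : g₁ ≠ 0 := fun h => hm0 (Nat.eq_zero_of_zero_dvd (h ▸ hg₁m))
  by_cases hcase : g₁ ^ 2 > m
  · left
    rw [hm', if_pos hcase, hg₁]
    exact Int.gcd_dvd_left _ _
  · right
    rw [hm', if_neg hcase]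
    -- rewrite g₂ without the mod
    set k := Nat.log 2 m with hk
    have hg₂' : g₂ = Nat.gcd (g₁ ^ k) m := by
      rw [hg₂, ← Nat.gcd_rec, Nat.gcd_comm]
    have hg₂m : g₂ ∣ m := hg₂' ▸ Nat.gcd_dvd_right _ _
    have hg₂0 : g₂ ≠ 0 := fun h => hm0 (Nat.eq_zero_of_zero_dvd (h ▸ hg₂m))
    have hq0 : m / g₂ ≠ 0 := by
      have := Nat.div_pos (Nat.le_of_dvd (by omega) hg₂m) (Nat.pos_of_ne_zero hg₂0)
      omega
    rw [Int.gcd]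
    simp only [Int.natAbs_natCast]
    -- show coprimality
    rcases eq_or_ne (Nat.gcd a.natAbs (m / g₂)) 1 with h1 | h1
    · exact h1
    exfalso
    obtain ⟨p, pp, hpd⟩ := Nat.exists_prime_and_dvd h1
    have hpa : p ∣ a.natAbs := hpd.trans (Nat.gcd_dvd_left _ _)
    have hpq : p ∣ m / g₂ := hpd.trans (Nat.gcd_dvd_right _ _)
    have hqm : m / g₂ ∣ m := Nat.div_dvd_of_dvd hg₂m
    have hpm : p ∣ m := hpq.trans hqm
    have hpg₁ : p ∣ g₁ := hg₁' ▸ Nat.dvd_gcd hpa hpm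
    set e := m.factorization p with he
    have he1 : 1 ≤ e := (Nat.Prime.factorization_pos_of_dvd pp hm0 hpm)
    have hek : e ≤ k := by
      have h1 : p ^ e ∣ m := Nat.ordProj_dvd m p
      have h2 : p ^ e ≤ m := Nat.le_of_dvd (by omega) h1
      have h3 : 2 ^ e ≤ p ^ e := Nat.pow_le_pow_left pp.two_le e
      exact (Nat.le_log_iff_pow_le (by norm_num) hm0).mpr (le_trans h3 h2)
    have hf₁ : 1 ≤ g₁.factorization p := Nat.Prime.factorization_pos_of_dvd pp hg₁0 hpg₁
    have hpow0 : g₁ ^ k ≠ 0 := pow_ne_zero _ hg₁0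
    have hg₂f : g₂.factorization p = e := by
      rw [hg₂', Nat.factorization_gcd hpow0 hm0]
      simp only [Finsupp.inf_apply, Nat.factorization_pow, Finsupp.smul_apply, smul_eq_mul]
      have : e ≤ k * g₁.factorization p := le_trans hek (Nat.le_mul_of_pos_right k hf₁)
      omega
    have hqf : (m / g₂).factorization p = 0 := by
      rw [Nat.factorization_div hg₂m]
      simp [hg₂f, he]
    have : 1 ≤ (m / g₂).factorization p := Nat.Prime.factorization_pos_of_dvd pp hq0 hpq
    omega
end

section
/- Let m ≥ 2 and p a prime with p dividing m and p² > m, and let a be an integer. If a ≡ 0 (mod p), then a is not invertible modulo m; moreover, with m' the output of NewModulus(a, m) (m' = gcd(a,m) if gcd(a,m)² > m, else m' = m/gcd(gcd(a,m)^⌊log₂ m⌋ mod m, m)), a ≡ 0 (mod m'). -/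
theorem stmt_18 (m : ℕ) (hm : 2 ≤ m) (p : ℕ) (hp : p.Prime) (hpm : p ∣ m)
    (hp2 : p ^ 2 > m) (a : ℤ) (ha : (p : ℤ) ∣ a) (g₁ g₂ m' : ℕ)
    (hg₁ : g₁ = Int.gcd a m)
    (hg₂ : g₂ = Nat.gcd (g₁ ^ Nat.log 2 m % m) m)
    (hm' : m' = if g₁ ^ 2 > m then g₁ else m / g₂) :
    ¬ IsUnit ((a : ZMod m)) ∧ (m' : ℤ) ∣ a := by
  have hm0 : NeZero m := ⟨by omega⟩
  have hpg : p ∣ g₁ := by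
    rw [hg₁]
    have : (p : ℤ) ∣ Int.gcd a m := Int.dvd_coe_gcd ha (Int.natCast_dvd_natCast.mpr hpm)
    exact_mod_cast this
  have hg₁pos : 0 < g₁ := by
    rw [hg₁]
    exact Int.gcd_pos_of_ne_zero_right a (by exact_mod_cast (by omega : m ≠ 0))
  have hple : p ≤ g₁ := Nat.le_of_dvd hg₁pos hpg
  have hbig : g₁ ^ 2 > m := lt_of_lt_of_le hp2 (Nat.pow_le_pow_left hple 2)
  constructor
  · intro h
    have hpa : (p : ℤ) ∣ a := ha
    obtain ⟨c, hc⟩ := hpa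
    have hpu : IsUnit ((p : ℕ) : ZMod m) := by
      refine isUnit_of_dvd_unit ⟨(c : ZMod m), ?_⟩ h
      push_cast [hc]
      ring
    have hcop := (ZMod.isUnit_iff_coprime p m).mp hpu
    exact absurd (hcop.eq_one_of_dvd hpm) hp.one_lt.ne'
  · rw [hm', if_pos hbig, hg₁]
    exact Int.gcd_dvd_left _ _
end
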